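/- Let R : (0,∞) → (0,∞) be given by the subordination formula R(ρ) = ∫₀^∞ f(λ) (4πλ)^{-d/2} e^{-ρ²/(4λ)} dλ with f ≥ 0 measurable and the integral finite for all ρ > 0. Then R'(ρ) < 0 for all ρ > 0 (assuming f not a.e. zero), and ρ R''(ρ) - R'(ρ) ≥ 0 for all ρ > 0. -/

import Mathlib

open MeasureTheory Real

/-- For the subordinated radial profile
`R(ρ) = ∫₀^∞ f(λ)(4πλ)^{-d/2} e^{-ρ²/(4λ)} dλ` with `f ≥ 0` not a.e. zero
(differentiation under the integral sign being assumed), one has `R'(ρ) < 0`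
and `ρR''(ρ) - R'(ρ) ≥ 0` for every `ρ > 0`. -/
theorem subordinated_profile_derivatives (d : ℕ) (hd : 1 ≤ d)
    (f : ℝ → ℝ) (hf_meas : Measurable f) (hf_nonneg : ∀ l, 0 ≤ f l)
    (hf_ne : ¬ (∀ᵐ l ∂(volume.restrict (Set.Ioi (0 : ℝ))), f l = 0))
    (R : ℝ → ℝ)
    (hR : ∀ ρ : ℝ, 0 < ρ → R ρ =
      ∫ l in Set.Ioi (0 : ℝ),
        f l * (4 * Real.pi * l) ^ (-(d : ℝ) / 2) * Real.exp (-ρ ^ 2 / (4 * l)))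
    (hR_int : ∀ ρ : ℝ, 0 < ρ → IntegrableOn
      (fun l => f l * (4 * Real.pi * l) ^ (-(d : ℝ) / 2) * Real.exp (-ρ ^ 2 / (4 * l)))
      (Set.Ioi (0 : ℝ)))
    (hR' : ∀ ρ : ℝ, 0 < ρ → deriv R ρ =
      ∫ l in Set.Ioi (0 : ℝ),
        f l * (4 * Real.pi * l) ^ (-(d : ℝ) / 2) * (-(ρ / (2 * l))) *
          Real.exp (-ρ ^ 2 / (4 * l)))
    (hR'_int : ∀ ρ : ℝ, 0 < ρ → IntegrableOn
      (fun l => f l * (4 * Real.pi * l) ^ (-(d : ℝ) / 2) * (-(ρ / (2 * l))) *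
        Real.exp (-ρ ^ 2 / (4 * l))) (Set.Ioi (0 : ℝ)))
    (hR'' : ∀ ρ : ℝ, 0 < ρ → deriv (deriv R) ρ =
      ∫ l in Set.Ioi (0 : ℝ),
        f l * (4 * Real.pi * l) ^ (-(d : ℝ) / 2) *
          (ρ ^ 2 / (4 * l ^ 2) - 1 / (2 * l)) * Real.exp (-ρ ^ 2 / (4 * l)))
    (hR''_int : ∀ ρ : ℝ, 0 < ρ → IntegrableOn
      (fun l => f l * (4 * Real.pi * l) ^ (-(d : ℝ) / 2) *
        (ρ ^ 2 / (4 * l ^ 2) - 1 / (2 * l)) * Real.exp (-ρ ^ 2 / (4 * l)))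
      (Set.Ioi (0 : ℝ))) :
    ∀ ρ : ℝ, 0 < ρ →
      deriv R ρ < 0 ∧ 0 ≤ ρ * deriv (deriv R) ρ - deriv R ρ := by
  intro ρ hρ
  set g1 : ℝ → ℝ := fun l => f l * (4 * Real.pi * l) ^ (-(d : ℝ) / 2) * (-(ρ / (2 * l))) *
        Real.exp (-ρ ^ 2 / (4 * l)) with hg1
  set g2 : ℝ → ℝ := fun l => f l * (4 * Real.pi * l) ^ (-(d : ℝ) / 2) *
        (ρ ^ 2 / (4 * l ^ 2) - 1 / (2 * l)) * Real.exp (-ρ ^ 2 / (4 * l)) with hg2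
  have hint1 := hR'_int ρ hρ
  have hint2 := hR''_int ρ hρ
  constructor
  · -- strict negativity
    rw [hR' ρ hρ]
    have hpos : 0 < ∫ l in Set.Ioi (0:ℝ), -g1 l := by
      rw [setIntegral_pos_iff_support_of_nonneg_ae]
      · -- positive measure of support
        have hne : volume ({l | f l ≠ 0} ∩ Set.Ioi (0:ℝ)) ≠ 0 := by
          intro h
          apply hf_ne
          rw [Filter.eventually_iff, mem_ae_iff]
          have hra : (volume.restrict (Set.Ioi (0:ℝ))) {x | f x = 0}ᶜ
              = volume ({x | f x = 0}ᶜ ∩ Set.Ioi (0:ℝ)) :=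
            Measure.restrict_apply ((hf_meas (measurableSet_singleton 0)).compl)
          rw [hra]
          convert h using 2
          rfl
        have hsub : {l | f l ≠ 0} ∩ Set.Ioi (0:ℝ) ⊆ Function.support (fun l => -g1 l) ∩ Set.Ioi (0:ℝ) := by
          rintro l ⟨hfl, hl⟩
          refine ⟨?_, hl⟩
          have hl0 : (0:ℝ) < l := hl
          have h1 : (0:ℝ) < (4 * Real.pi * l) ^ (-(d : ℝ) / 2) :=
            Real.rpow_pos_of_pos (by positivity) _
          have hfpos : 0 < f l := lt_of_le_of_ne (hf_nonneg l) (Ne.symm hfl)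
          have hval : -g1 l = f l * (4 * Real.pi * l) ^ (-(d : ℝ) / 2) * (ρ / (2 * l)) *
              Real.exp (-ρ ^ 2 / (4 * l)) := by
            simp only [hg1]; ring
          have : 0 < -g1 l := by
            rw [hval]
            exact mul_pos (mul_pos (mul_pos hfpos h1) (div_pos hρ (by linarith))) (Real.exp_pos _)
          simpa [Function.mem_support] using ne_of_gt this
        exact lt_of_lt_of_le (by simpa [pos_iff_ne_zero] using hne) (measure_mono hsub)
      · -- nonneg a.e.
        refine (ae_restrict_iff' measurableSet_Ioi).2 (Filter.Eventually.of_forall ?_)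
        intro l hl
        have hl0 : (0:ℝ) < l := hl
        have h1 : (0:ℝ) < (4 * Real.pi * l) ^ (-(d : ℝ) / 2) :=
          Real.rpow_pos_of_pos (by positivity) _
        have hval : -g1 l = f l * (4 * Real.pi * l) ^ (-(d : ℝ) / 2) * (ρ / (2 * l)) *
            Real.exp (-ρ ^ 2 / (4 * l)) := by
          simp only [hg1]; ring
        show (0:ℝ) ≤ -g1 l
        rw [hval]
        exact mul_nonneg (mul_nonneg (mul_nonneg (hf_nonneg l) h1.le)
          (div_nonneg hρ.le (by linarith))) (Real.exp_pos _).le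
      · exact hint1.neg
    have heq : ∫ l in Set.Ioi (0:ℝ), -g1 l = -∫ l in Set.Ioi (0:ℝ), g1 l := integral_neg _
    rw [heq] at hpos
    linarith
  · rw [hR' ρ hρ, hR'' ρ hρ]
    have e1 : IntegrableOn (fun l => ρ * g2 l) (Set.Ioi (0:ℝ)) := hint2.const_mul ρ
    have hcomb : ρ * (∫ l in Set.Ioi (0:ℝ), g2 l) - ∫ l in Set.Ioi (0:ℝ), g1 l
        = ∫ l in Set.Ioi (0:ℝ), (ρ * g2 l - g1 l) := by
      rw [integral_sub e1 hint1, integral_const_mul]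
    rw [hcomb]
    refine setIntegral_nonneg measurableSet_Ioi ?_
    intro l hl
    have hl0 : (0:ℝ) < l := hl
    have h1 : (0:ℝ) < (4 * Real.pi * l) ^ (-(d : ℝ) / 2) :=
      Real.rpow_pos_of_pos (by positivity) _
    have hkey : ρ * g2 l - g1 l
        = f l * (4 * Real.pi * l) ^ (-(d : ℝ) / 2) * (ρ^3 / (4 * l^2)) * Real.exp (-ρ ^ 2 / (4 * l)) := by
      simp only [hg1, hg2]
      field_simp
      ring
    rw [hkey]
    exact mul_nonneg (mul_nonneg (mul_nonneg (hf_nonneg l) h1.le)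
      (div_nonneg (by positivity) (by positivity))) (Real.exp_pos _).le
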